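/- Let Ω be a closed interval in ℝ, let A be an m×m Hermitian matrix all of whose eigenvalues lie in Ω, partitioned into k² blocks M_{ij} (1 ≤ i,j ≤ k) according to a partition of the index set into k consecutive groups, and let f : Ω → ℝ be a convex function. Then Tr(f(A)) ≥ Tr(f(M_{11} ⊕ M_{22} ⊕ ⋯ ⊕ M_{kk})), where ⊕ denotes the direct sum (block diagonal matrix formed from the diagonal blocks of A). -/

import Mathlib

open Matrix

section Aux

variable {n : Type*} [Fintype n] [DecidableEq n]

/-- If `B * W = W * diagonal μ`, then `f(B) * W = W * diagonal (f ∘ μ)`. -/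
lemma cfc_mul_of_mul_diagonal {B : Matrix n n ℝ} (hB : B.IsHermitian)
    (W : Matrix n n ℝ) (μ : n → ℝ) (hBW : B * W = W * diagonal μ) (f : ℝ → ℝ) :
    hB.cfc f * W = W * diagonal (f ∘ μ) := by
  set U : Matrix n n ℝ := (hB.eigenvectorUnitary : Matrix n n ℝ) with hU
  have hU1 : star U * U = 1 := Unitary.coe_star_mul_self _
  have hU2 : U * star U = 1 := Unitary.coe_mul_star_self _
  have hspec : B = U * diagonal hB.eigenvalues * star U := by
    have := hB.spectral_theorem
    rwa [RCLike.ofReal_real_eq_id, Function.id_comp] at this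
  have h1 : star U * B = diagonal hB.eigenvalues * star U := by
    conv_lhs => rw [hspec]
    rw [← mul_assoc, ← mul_assoc, hU1, one_mul]
  have hkey : diagonal hB.eigenvalues * (star U * W) = (star U * W) * diagonal μ := by
    calc diagonal hB.eigenvalues * (star U * W)
        = (diagonal hB.eigenvalues * star U) * W := by rw [mul_assoc]
      _ = (star U * B) * W := by rw [h1]
      _ = star U * (W * diagonal μ) := by rw [mul_assoc, hBW]
      _ = (star U * W) * diagonal μ := by rw [mul_assoc]
  have hent : ∀ p q, hB.eigenvalues p * (star U * W) p q = (star U * W) p q * μ q := by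
    intro p q
    have := congrFun (congrFun hkey p) q
    simpa [diagonal_mul, mul_diagonal] using this
  have hfkey : diagonal (f ∘ hB.eigenvalues) * (star U * W)
      = (star U * W) * diagonal (f ∘ μ) := by
    ext p q
    simp only [diagonal_mul, mul_diagonal, Function.comp_apply]
    rcases eq_or_ne ((star U * W) p q) 0 with h | h
    · simp [h]
    · have : hB.eigenvalues p = μ q := by
        have h2 := hent p q
        rw [mul_comm ((star U * W) p q) (μ q)] at h2
        exact mul_right_cancel₀ h h2
      rw [this, mul_comm]
  have hcfc : hB.cfc f = U * diagonal (f ∘ hB.eigenvalues) * star U := by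
    rw [Matrix.IsHermitian.cfc, RCLike.ofReal_real_eq_id, Function.id_comp, Unitary.conjStarAlgAut_apply]
  calc hB.cfc f * W
      = U * (diagonal (f ∘ hB.eigenvalues) * (star U * W)) := by
        rw [hcfc]; simp only [mul_assoc]
    _ = U * ((star U * W) * diagonal (f ∘ μ)) := by rw [hfkey]
    _ = (U * star U) * (W * diagonal (f ∘ μ)) := by simp only [mul_assoc]
    _ = W * diagonal (f ∘ μ) := by rw [hU2, one_mul]

lemma trace_cfc_eq_sum {B : Matrix n n ℝ} (hB : B.IsHermitian) (f : ℝ → ℝ) :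
    (hB.cfc f).trace = ∑ p, f (hB.eigenvalues p) := by
  set U : Matrix n n ℝ := (hB.eigenvectorUnitary : Matrix n n ℝ) with hU
  have hU1 : star U * U = 1 := Unitary.coe_star_mul_self _
  have hcfc : hB.cfc f = U * diagonal (f ∘ hB.eigenvalues) * star U := by
    rw [Matrix.IsHermitian.cfc, RCLike.ofReal_real_eq_id, Function.id_comp, Unitary.conjStarAlgAut_apply]
  rw [hcfc, trace_mul_cycle, hU1, one_mul, trace_diagonal]
  simp

/-- Peierls' inequality. -/
lemma peierls {B : Matrix n n ℝ} (hB : B.IsHermitian) {α β : ℝ}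
    (heig : ∀ p, hB.eigenvalues p ∈ Set.Icc α β)
    {f : ℝ → ℝ} (hf : ConvexOn ℝ (Set.Icc α β) f)
    (W : Matrix n n ℝ) (hW1 : star W * W = 1) (hW2 : W * star W = 1) :
    ∑ q, f ((star W * B * W) q q) ≤ ∑ p, f (hB.eigenvalues p) := by
  set U : Matrix n n ℝ := (hB.eigenvectorUnitary : Matrix n n ℝ) with hU
  have hU1 : star U * U = 1 := Unitary.coe_star_mul_self _
  have hU2 : U * star U = 1 := Unitary.coe_mul_star_self _
  have hspec : B = U * diagonal hB.eigenvalues * star U := by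
    have := hB.spectral_theorem
    rwa [RCLike.ofReal_real_eq_id, Function.id_comp] at this
  set V : Matrix n n ℝ := star U * W with hV
  have hsV : star V = star W * U := by rw [hV, Matrix.star_mul, star_star]
  have hV1 : star V * V = 1 := by
    rw [hsV, hV]
    calc star W * U * (star U * W) = star W * ((U * star U) * W) := by
          simp only [mul_assoc]
      _ = 1 := by rw [hU2, one_mul, hW1]
  have hV2 : V * star V = 1 := by
    rw [hsV, hV]
    calc star U * W * (star W * U) = star U * ((W * star W) * U) := by
          simp only [mul_assoc]
      _ = 1 := by rw [hW2, one_mul, hU1]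
  have hconj : star W * B * W = star V * diagonal hB.eigenvalues * V := by
    rw [hsV, hV]
    conv_lhs => rw [hspec]
    simp only [mul_assoc]
  have hdiagentry : ∀ q, (star W * B * W) q q =
      ∑ p, (V p q)^2 * hB.eigenvalues p := by
    intro q
    calc (star W * B * W) q q
        = ∑ p, (star V * diagonal hB.eigenvalues) q p * V p q := by
          rw [hconj, mul_apply]
      _ = ∑ p, (V p q)^2 * hB.eigenvalues p := by
          apply Finset.sum_congr rfl
          intro p _
          rw [mul_diagonal, star_apply, star_trivial]
          ring
  have hcolsum : ∀ q, ∑ p, (V p q)^2 = 1 := by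
    intro q
    have := congrFun (congrFun hV1 q) q
    simpa [mul_apply, star_apply, sq, Matrix.one_apply_eq] using this
  have hrowsum : ∀ p, ∑ q, (V p q)^2 = 1 := by
    intro p
    have := congrFun (congrFun hV2 p) p
    simpa [mul_apply, star_apply, sq, Matrix.one_apply_eq] using this
  calc ∑ q, f ((star W * B * W) q q)
      ≤ ∑ q, ∑ p, (V p q)^2 * f (hB.eigenvalues p) := by
        apply Finset.sum_le_sum
        intro q _
        rw [hdiagentry q]
        have := hf.map_sum_le (t := Finset.univ) (w := fun p => (V p q)^2)
          (p := hB.eigenvalues) (fun p _ => sq_nonneg _) (hcolsum q)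
          (fun p _ => heig p)
        simpa [smul_eq_mul] using this
    _ = ∑ p, f (hB.eigenvalues p) := by
        rw [Finset.sum_comm]
        apply Finset.sum_congr rfl
        intro p _
        rw [← Finset.sum_mul, hrowsum p, one_mul]

end Aux

/-- Block version of the majorization trace inequality: for a Hermitian matrix `A`
(indexed by pairs `(i,j)`, `i : Fin k`, `j : Fin (m i)`) with all eigenvalues in the closed
interval `[α, β]`, and a convex function `f` on `[α, β]`,
`Tr(f(A)) ≥ Tr(f(M₁₁ ⊕ ⋯ ⊕ M_kk))`, where the direct sum of the diagonal blocks of `A`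
is the matrix `D` with `D (i,j) (i',j') = A (i,j) (i',j')` if `i = i'` and `0` otherwise
(which is again Hermitian, as witnessed by `hD`). -/
theorem stmt_4 {k : ℕ} (hk : 1 ≤ k) (m : Fin k → ℕ)
    (α β : ℝ) (A : Matrix (Σ i : Fin k, Fin (m i)) (Σ i : Fin k, Fin (m i)) ℝ)
    (hA : A.IsHermitian)
    (heig : ∀ p, hA.eigenvalues p ∈ Set.Icc α β)
    (f : ℝ → ℝ) (hf : ConvexOn ℝ (Set.Icc α β) f)
    (D : Matrix (Σ i : Fin k, Fin (m i)) (Σ i : Fin k, Fin (m i)) ℝ)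
    (hDdef : ∀ p q : Σ i : Fin k, Fin (m i), D p q = if p.1 = q.1 then A p q else 0)
    (hD : D.IsHermitian) :
    Matrix.trace (hD.cfc f) ≤ Matrix.trace (hA.cfc f) := by
  classical
  -- the diagonal blocks
  set M : ∀ i : Fin k, Matrix (Fin (m i)) (Fin (m i)) ℝ :=
    fun i => Matrix.of (fun a b => A ⟨i, a⟩ ⟨i, b⟩) with hMdef
  have hM : ∀ i, (M i).IsHermitian := by
    intro i
    ext a b
    simpa [hMdef] using (hA.apply ⟨i, b⟩ ⟨i, a⟩).symm
  have hDblock : D = blockDiagonal' M := by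
    ext p q
    rw [hDdef, blockDiagonal'_apply]
    rcases p with ⟨i, a⟩
    rcases q with ⟨i', b⟩
    by_cases h : i = i'
    · subst h; simp [hMdef]
    · simp [h]
  set U : ∀ i : Fin k, Matrix (Fin (m i)) (Fin (m i)) ℝ :=
    fun i => ((hM i).eigenvectorUnitary : Matrix (Fin (m i)) (Fin (m i)) ℝ) with hUdef
  set W : Matrix (Σ i : Fin k, Fin (m i)) (Σ i : Fin k, Fin (m i)) ℝ :=
    blockDiagonal' U with hWdef
  set μ : (Σ i : Fin k, Fin (m i)) → ℝ := fun p => (hM p.1).eigenvalues p.2 with hμdef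
  have hstarW : star W = blockDiagonal' (fun i => star (U i)) := by
    rw [hWdef, Matrix.star_eq_conjTranspose, blockDiagonal'_conjTranspose]
    rfl
  have hUU1 : ∀ i, star (U i) * U i = 1 := fun i => Unitary.coe_star_mul_self _
  have hUU2 : ∀ i, U i * star (U i) = 1 := fun i => Unitary.coe_mul_star_self _
  have hW1 : star W * W = 1 := by
    rw [hstarW, hWdef, ← blockDiagonal'_mul]
    simp only [hUU1]
    exact blockDiagonal'_one
  have hW2 : W * star W = 1 := by
    rw [hstarW, hWdef, ← blockDiagonal'_mul]
    simp only [hUU2]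
    exact blockDiagonal'_one
  have hW0 : ∀ r q : (Σ i : Fin k, Fin (m i)), r.1 ≠ q.1 → W r q = 0 := by
    intro r q h
    rw [hWdef, blockDiagonal'_apply, dif_neg h]
  have hdiagμ : diagonal μ = blockDiagonal' (fun i => diagonal ((hM i).eigenvalues)) := by
    rw [blockDiagonal'_diagonal]
  have hDW : D * W = W * diagonal μ := by
    rw [hDblock, hWdef, hdiagμ, ← blockDiagonal'_mul, ← blockDiagonal'_mul]
    refine congrArg _ (funext fun i => ?_)
    have hspec : M i = U i * diagonal ((hM i).eigenvalues) * star (U i) := by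
      have := (hM i).spectral_theorem
      rwa [RCLike.ofReal_real_eq_id, Function.id_comp] at this
    calc M i * U i
        = U i * (diagonal ((hM i).eigenvalues) * (star (U i) * U i)) := by
          conv_lhs => rw [hspec]
          simp only [mul_assoc]
      _ = U i * diagonal ((hM i).eigenvalues) := by rw [hUU1 i, mul_one]
  -- trace of f(D)
  have htrD : (hD.cfc f).trace = ∑ p, f (μ p) := by
    have h1 : hD.cfc f * W = W * diagonal (f ∘ μ) := cfc_mul_of_mul_diagonal hD W μ hDW f
    have h2 : hD.cfc f = W * diagonal (f ∘ μ) * star W := by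
      calc hD.cfc f = hD.cfc f * (W * star W) := by rw [hW2, mul_one]
        _ = (hD.cfc f * W) * star W := by rw [mul_assoc]
        _ = W * diagonal (f ∘ μ) * star W := by rw [h1]
    rw [h2, trace_mul_cycle, hW1, one_mul, trace_diagonal]
    simp
  -- diagonal entries of star W * A * W are the μ's
  have hdiagA : ∀ q, (star W * A * W) q q = μ q := by
    intro q
    have hAD : (star W * A * W) q q = (star W * D * W) q q := by
      simp only [mul_apply, star_apply, star_trivial]
      apply Finset.sum_congr rfl
      intro s _
      by_cases hs : s.1 = q.1
      · congr 1
        apply Finset.sum_congr rfl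
        intro r _
        by_cases hr : r.1 = q.1
        · rw [hDdef r s, if_pos (hr.trans hs.symm)]
        · rw [hW0 r q hr, zero_mul, zero_mul]
      · rw [hW0 s q hs, mul_zero, mul_zero]
    have hDWq : star W * D * W = diagonal μ := by
      rw [mul_assoc, hDW, ← mul_assoc, hW1, one_mul]
    rw [hAD, hDWq, diagonal_apply_eq]
  rw [htrD, trace_cfc_eq_sum hA f]
  calc ∑ p, f (μ p) = ∑ q, f ((star W * A * W) q q) := by
        apply Finset.sum_congr rfl
        intro q _
        rw [hdiagA q]
    _ ≤ ∑ p, f (hA.eigenvalues p) := peierls hA heig hf W hW1 hW2
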